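/- arXiv:2505.01525 — 2 statements merged into one kernel-verified Lean document; each statement's English description precedes it below -/
import Mathlib

section
/- The Boris rotation step preserves speed exactly: let b̂ ∈ ℝ³ be a unit vector and w ∈ ℝ, and given v⁻ ∈ ℝ³ define v' = v⁻ + v⁻ × (w b̂) and v⁺ = v⁻ + v' × (2w/(1+w²)) b̂. Then ‖v⁺‖ = ‖v⁻‖. -/
open Matrix

/-- The Boris rotation step preserves speed: with `b̂` a unit vector, `w ∈ ℝ`,
`v' = v⁻ + v⁻ × (w b̂)` and `v⁺ = v⁻ + v' × ((2w/(1+w²)) b̂)`, one has `‖v⁺‖ = ‖v⁻‖`. -/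
theorem boris_rotation_preserves_speed (b : Fin 3 → ℝ) (hb : b ⬝ᵥ b = 1) (w : ℝ)
    (vm : Fin 3 → ℝ) :
    Real.sqrt
        ((vm + crossProduct (vm + crossProduct vm (w • b)) ((2 * w / (1 + w ^ 2)) • b)) ⬝ᵥ
          (vm + crossProduct (vm + crossProduct vm (w • b)) ((2 * w / (1 + w ^ 2)) • b))) =
      Real.sqrt (vm ⬝ᵥ vm) := by
  have h1 : (1:ℝ) + w^2 ≠ 0 := by positivity
  congr 1
  simp only [crossProduct, dotProduct, Fin.sum_univ_three, LinearMap.mk₂_apply,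
    Pi.add_apply, Pi.smul_apply, smul_eq_mul, cons_val_zero, cons_val_one, head_cons,
    cons_val_two, tail_cons] at *
  field_simp
  linear_combination (4*b 2^2*w^4*vm 1^2 + 4*b 2^2*w^4*vm 0^2 - 8*b 1*b 2*w^4*vm 1*vm 2 +
    4*b 1^2*w^4*vm 2^2 + 4*b 1^2*w^4*vm 0^2 - 8*b 0*b 2*w^4*vm 0*vm 2 -
    8*b 0*b 1*w^4*vm 0*vm 1 + 4*b 0^2*w^4*vm 2^2 + 4*b 0^2*w^4*vm 1^2) * hb
end

section
/- With b̂ a unit vector, w = tan(θ/2) for θ ∈ (−π, π), and v⁻ ∈ ℝ³ perpendicular to b̂, the Boris update v⁺ = v⁻ + (v⁻ + v⁻ × (w b̂)) × (2w/(1+w²)) b̂ equals the rotation of v⁻ by angle θ about the axis b̂: v⁺ = cos θ · v⁻ − sin θ · (b̂ × v⁻). -/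
open Matrix

/-- With `b̂` a unit vector, `w = tan(θ/2)` for `θ ∈ (−π, π)`, and `v⁻ ⊥ b̂`, the Boris
update `v⁺ = v⁻ + (v⁻ + v⁻ × (w b̂)) × ((2w/(1+w²)) b̂)` equals the rotation of `v⁻` by
angle `θ` about `b̂`: `v⁺ = cos θ · v⁻ − sin θ · (b̂ × v⁻)`. -/
theorem boris_rotation_is_rotation (b : Fin 3 → ℝ) (hb : b ⬝ᵥ b = 1)
    (θ : ℝ) (hθ : θ ∈ Set.Ioo (-Real.pi) Real.pi)
    (vm : Fin 3 → ℝ) (hperp : vm ⬝ᵥ b = 0) :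
    vm + crossProduct (vm + crossProduct vm (Real.tan (θ / 2) • b))
        ((2 * Real.tan (θ / 2) / (1 + Real.tan (θ / 2) ^ 2)) • b) =
      Real.cos θ • vm - Real.sin θ • crossProduct b vm := by
  obtain ⟨h1, h2⟩ := hθ
  have hc : Real.cos (θ / 2) ≠ 0 := by
    apply ne_of_gt
    apply Real.cos_pos_of_mem_Ioo
    constructor <;> [linarith; linarith]
  have hpy := Real.sin_sq_add_cos_sq (θ / 2)
  have hd : (1 : ℝ) + Real.tan (θ / 2) ^ 2 ≠ 0 := by positivity
  have hs : Real.sin θ = 2 * Real.tan (θ / 2) / (1 + Real.tan (θ / 2) ^ 2) := by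
    rw [show θ = 2 * (θ / 2) by ring, Real.sin_two_mul, Real.tan_eq_sin_div_cos]
    field_simp
    ring_nf
    linear_combination Real.sin (θ * (1 / 2)) * Real.sin_sq_add_cos_sq (θ * (1 / 2))
  have hC : Real.cos θ = 1 - Real.sin θ * Real.tan (θ / 2) := by
    rw [show θ = 2 * (θ / 2) by ring, Real.cos_two_mul, Real.sin_two_mul,
      Real.tan_eq_sin_div_cos]
    field_simp
    linear_combination 2 * hpy
  rw [← hs]
  simp only [dotProduct, Fin.sum_univ_three] at hb hperp
  funext i
  fin_cases i <;>
    simp [crossProduct, Pi.add_apply, Pi.sub_apply, Pi.smul_apply, smul_eq_mul,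
      Matrix.vecHead, Matrix.vecTail] <;>
    [skip; skip; skip]
  · linear_combination (-vm 0) * hC + (Real.sin θ * Real.tan (θ / 2) * b 0) * hperp
      - (Real.sin θ * Real.tan (θ / 2) * vm 0) * hb
  · linear_combination (-vm 1) * hC + (Real.sin θ * Real.tan (θ / 2) * b 1) * hperp
      - (Real.sin θ * Real.tan (θ / 2) * vm 1) * hb
  · linear_combination (-vm 2) * hC + (Real.sin θ * Real.tan (θ / 2) * b 2) * hperp
      - (Real.sin θ * Real.tan (θ / 2) * vm 2) * hb
end
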